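/- Let k, k' be g-tuples of positive integers with k'_i ≥ k_i for all i. Then the balanced compatibility region satisfies Γ(g,d,k') ⊆ Γ(g,d,k): if s ∈ [0,1]^g is such that for all g-tuples of d-dimensional POVMs with k'_i outcomes the noisy POVMs s_i E^{(i)} + (1-s_i) I/k'_i are jointly measurable, then for all g-tuples of d-dimensional POVMs with k_i outcomes the noisy POVMs s_i E^{(i)} + (1-s_i) I/k_i are jointly measurable. -/

import Mathlib

open Matrix
open scoped ComplexOrder

set_option maxHeartbeats 1000000

/-- A family `E` of POVMs on `ℂ^d` (the `i`-th having `k i` outcomes) is jointly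
measurable if there is a joint POVM `G` indexed by outcome tuples whose marginals
are the `E i`. -/
def JointlyMeasurable {d g : ℕ} (k : Fin g → ℕ)
    (E : ∀ i : Fin g, Fin (k i) → Matrix (Fin d) (Fin d) ℂ) : Prop :=
  ∃ G : (∀ i : Fin g, Fin (k i)) → Matrix (Fin d) (Fin d) ℂ,
    (∀ η, (G η).PosSemidef) ∧ (∑ η, G η = 1) ∧
      ∀ (u : Fin g) (v : Fin (k u)),
        E u v = ∑ η ∈ Finset.univ.filter (fun η : ∀ i : Fin g, Fin (k i) => η u = v), G η

/-- A nonnegative complex scalar multiple of a PSD matrix is PSD. -/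
lemma psd_smul {n : ℕ} {M : Matrix (Fin n) (Fin n) ℂ} (hM : M.PosSemidef)
    {c : ℂ} (hc : 0 ≤ c) : (c • M).PosSemidef := by
  have hcr : (starRingEnd ℂ) c = c := by
    rw [Complex.conj_eq_iff_im]
    exact ((Complex.nonneg_iff.mp hc).2).symm
  constructor
  · unfold Matrix.IsHermitian
    rw [conjTranspose_smul, hM.1]
    simp [hcr]
  · intro x
    exact (hM.smul hc).2 x

/-- Sum over all tuples of a product factorizes. -/
lemma sum_prod_pi {g : ℕ} (m : Fin g → ℕ) (f : ∀ i, Fin (m i) → ℂ) :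
    ∑ η : ∀ i : Fin g, Fin (m i), ∏ i, f i (η i) = ∏ i, ∑ v, f i v :=
  (Fintype.prod_sum f).symm

/-- Sum over tuples with a fixed coordinate of a product. -/
lemma sum_filter_prod {g : ℕ} (m : Fin g → ℕ) (f : ∀ i, Fin (m i) → ℂ)
    (u : Fin g) (v : Fin (m u)) (hf : ∀ i, i ≠ u → ∑ w, f i w = 1) :
    ∑ η ∈ Finset.univ.filter (fun η : ∀ i : Fin g, Fin (m i) => η u = v),
      ∏ i, f i (η i) = f u v := by
  classical
  set f' : ∀ i, Fin (m i) → ℂ :=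
    fun i w => if i = u then (if (w : ℕ) = (v : ℕ) then f i w else 0) else f i w with hf'
  have h1 : ∀ η : ∀ i : Fin g, Fin (m i),
      (if η u = v then ∏ i, f i (η i) else 0) = ∏ i, f' i (η i) := by
    intro η
    by_cases hη : η u = v
    · rw [if_pos hη]
      refine Finset.prod_congr rfl fun i _ => ?_
      by_cases hi : i = u
      · subst hi
        have : ((η i : ℕ)) = (v : ℕ) := congrArg Fin.val hη
        simp [hf', this]
      · simp [hf', hi]
    · rw [if_neg hη]
      symm
      apply Finset.prod_eq_zero (Finset.mem_univ u)
      have : ((η u : ℕ)) ≠ (v : ℕ) := fun hc => hη (Fin.ext hc)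
      simp [hf', this]
  rw [Finset.sum_filter, Finset.sum_congr rfl (fun η _ => h1 η), sum_prod_pi]
  have h2 : ∀ i, (∑ w, f' i w) = if i = u then f u v else 1 := by
    intro i
    by_cases hi : i = u
    · subst hi
      simp only [hf', if_pos rfl]
      have : ∀ w : Fin (m i), ((w : ℕ) = (v : ℕ)) ↔ w = v := fun w => Fin.val_inj
      rw [Finset.sum_congr rfl (fun w _ => by rw [if_congr (this w) rfl rfl])]
      simp
    · simp only [hf', if_neg hi]
      exact hf i hi
  rw [Finset.prod_congr rfl (fun i _ => h2 i)]
  simp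

/-- Monotonicity of the balanced compatibility region in the outcome numbers:
`Γ(g,d,k') ⊆ Γ(g,d,k)` whenever `k'ᵢ ≥ kᵢ` for all `i`. -/
theorem stmt_7 {d g : ℕ} (k k' : Fin g → ℕ) (hk : ∀ i, 0 < k i) (hkk' : ∀ i, k i ≤ k' i)
    (s : Fin g → ℝ) (hs : ∀ i, s i ∈ Set.Icc (0 : ℝ) 1)
    (h : ∀ E : ∀ i : Fin g, Fin (k' i) → Matrix (Fin d) (Fin d) ℂ,
      (∀ i, (∀ j, (E i j).PosSemidef) ∧ ∑ j, E i j = 1) →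
      JointlyMeasurable k'
        (fun i j => (s i : ℂ) • E i j + (((1 - s i) / (k' i) : ℝ) : ℂ) • 1)) :
    ∀ E : ∀ i : Fin g, Fin (k i) → Matrix (Fin d) (Fin d) ℂ,
      (∀ i, (∀ j, (E i j).PosSemidef) ∧ ∑ j, E i j = 1) →
      JointlyMeasurable k
        (fun i j => (s i : ℂ) • E i j + (((1 - s i) / (k i) : ℝ) : ℂ) • 1) := by
  classical
  intro E hE
  have hk0 : ∀ i, (k i : ℂ) ≠ 0 := fun i => Nat.cast_ne_zero.mpr (hk i).ne'
  have hk'0 : ∀ i, (k' i : ℂ) ≠ 0 := fun i =>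
    Nat.cast_ne_zero.mpr ((hk i).trans_le (hkk' i)).ne'
  -- padded POVMs with k' outcomes
  set F : ∀ i : Fin g, ℕ → Matrix (Fin d) (Fin d) ℂ :=
    fun i n => if hn : n < k i then E i ⟨n, hn⟩ else 0 with hF
  set E' : ∀ i : Fin g, Fin (k' i) → Matrix (Fin d) (Fin d) ℂ :=
    fun i j => F i (j : ℕ) with hE'def
  have hFj : ∀ i (j : Fin (k i)), F i (j : ℕ) = E i j := by
    intro i j
    simp [hF, j.2]
  have hE' : ∀ i, (∀ j, (E' i j).PosSemidef) ∧ ∑ j, E' i j = 1 := by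
    intro i
    constructor
    · intro j
      simp only [hE'def, hF]
      split_ifs with hn
      · exact (hE i).1 _
      · exact Matrix.PosSemidef.zero
    · have h1 : ∑ j : Fin (k' i), E' i j = ∑ n ∈ Finset.range (k' i), F i n := by
        simp only [hE'def]
        exact Fin.sum_univ_eq_sum_range _ _
      have h2 : ∑ n ∈ Finset.range (k i), F i n = ∑ n ∈ Finset.range (k' i), F i n := by
        apply Finset.sum_subset (Finset.range_subset_range.mpr (hkk' i))
        intro x _ hx
        rw [Finset.mem_range, not_lt] at hx
        simp [hF, Nat.not_lt.mpr hx]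
      have h3 : ∑ n ∈ Finset.range (k i), F i n = ∑ j : Fin (k i), E i j := by
        rw [← Fin.sum_univ_eq_sum_range]
        exact Finset.sum_congr rfl fun j _ => hFj i j
      rw [h1, ← h2, h3, (hE i).2]
  obtain ⟨G, hGpsd, hGsum, hGmarg⟩ := h E' hE'
  -- the post-processing kernel
  set Q : ∀ i : Fin g, Fin (k i) → ℕ → ℂ :=
    fun i v n => if n < k i then (if n = (v : ℕ) then 1 else 0) else ((k i : ℂ))⁻¹ with hQ
  set q : ∀ i : Fin g, Fin (k i) → Fin (k' i) → ℂ :=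
    fun i v w => Q i v (w : ℕ) with hq
  have hq0 : ∀ i v w, 0 ≤ q i v w := by
    intro i v w
    simp only [hq, hQ]
    split_ifs
    · exact zero_le_one
    · exact le_refl 0
    · rw [show ((k i : ℂ))⁻¹ = (((k i : ℝ)⁻¹ : ℝ) : ℂ) by push_cast; ring]
      exact Complex.zero_le_real.mpr (by positivity)
  have hqcol : ∀ i (w : Fin (k' i)), ∑ v, q i v w = 1 := by
    intro i w
    by_cases hw : (w : ℕ) < k i
    · simp only [hq, hQ, if_pos hw]
      have : ∀ v : Fin (k i), ((w : ℕ) = (v : ℕ)) ↔ ((⟨(w : ℕ), hw⟩ : Fin (k i)) = v) := by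
        intro v; rw [Fin.ext_iff]
      rw [Finset.sum_congr rfl (fun v _ => if_congr (this v) rfl rfl)]
      simp
    · simp only [hq, hQ, if_neg hw]
      rw [Finset.sum_const, Finset.card_univ, Fintype.card_fin, nsmul_eq_mul]
      exact mul_inv_cancel₀ (hk0 i)
  have hqrow : ∀ i (v : Fin (k i)), ∑ w, q i v w = (k' i : ℂ) / (k i : ℂ) := by
    intro i v
    have h1 : ∑ w : Fin (k' i), q i v w = ∑ n ∈ Finset.range (k' i), Q i v n := by
      simp only [hq]
      exact Fin.sum_univ_eq_sum_range _ _
    rw [h1, ← Finset.sum_range_add_sum_Ico _ (hkk' i)]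
    have h2 : ∑ n ∈ Finset.range (k i), Q i v n = 1 := by
      have : ∀ n ∈ Finset.range (k i), Q i v n = if n = (v : ℕ) then 1 else 0 := by
        intro n hn
        simp only [hQ, if_pos (Finset.mem_range.mp hn)]
      rw [Finset.sum_congr rfl this, Finset.sum_ite_eq' (Finset.range (k i)) (v : ℕ) (fun _ => 1),
        if_pos (Finset.mem_range.mpr v.2)]
    have h3 : ∑ n ∈ Finset.Ico (k i) (k' i), Q i v n = ((k' i - k i : ℕ) : ℂ) * (k i : ℂ)⁻¹ := by
      have : ∀ n ∈ Finset.Ico (k i) (k' i), Q i v n = ((k i : ℂ))⁻¹ := by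
        intro n hn
        simp only [hQ, if_neg (Nat.not_lt.mpr (Finset.mem_Ico.mp hn).1)]
      rw [Finset.sum_congr rfl this, Finset.sum_const, Nat.card_Ico, nsmul_eq_mul]
    rw [h2, h3, Nat.cast_sub (hkk' i)]
    field_simp [hk0 i]
    ring
  -- the new joint POVM
  set Gn : (∀ i : Fin g, Fin (k i)) → Matrix (Fin d) (Fin d) ℂ :=
    fun η => ∑ η' : ∀ i : Fin g, Fin (k' i), (∏ i, q i (η i) (η' i)) • G η' with hGn
  refine ⟨Gn, ?_, ?_, ?_⟩
  · -- PSD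
    intro η
    simp only [hGn]
    apply Finset.sum_induction _ Matrix.PosSemidef (fun a b ha hb => ha.add hb)
      Matrix.PosSemidef.zero
    intro η' _
    exact psd_smul (hGpsd η') (Finset.prod_nonneg fun i _ => hq0 i (η i) (η' i))
  · -- sums to 1
    simp only [hGn]
    rw [Finset.sum_comm]
    have : ∀ η' : ∀ i : Fin g, Fin (k' i),
        ∑ η : ∀ i : Fin g, Fin (k i), (∏ i, q i (η i) (η' i)) • G η' = G η' := by
      intro η'
      rw [← Finset.sum_smul, sum_prod_pi k (fun i x => q i x (η' i)),
        Finset.prod_congr rfl (fun i _ => hqcol i (η' i)), Finset.prod_const_one, one_smul]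
    rw [Finset.sum_congr rfl (fun η' _ => this η'), hGsum]
  · -- marginals
    intro u v
    have hswap : ∑ η ∈ Finset.univ.filter (fun η : ∀ i : Fin g, Fin (k i) => η u = v), Gn η
        = ∑ η' : ∀ i : Fin g, Fin (k' i), q u v (η' u) • G η' := by
      simp only [hGn]
      rw [Finset.sum_comm]
      refine Finset.sum_congr rfl fun η' _ => ?_
      rw [← Finset.sum_smul,
        sum_filter_prod k (fun i x => q i x (η' i)) u v (fun i _ => hqcol i (η' i))]
    rw [hswap]
    have hfib : ∑ η' : ∀ i : Fin g, Fin (k' i), q u v (η' u) • G η'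
        = ∑ w : Fin (k' u), q u v w •
            ∑ η' ∈ Finset.univ.filter (fun η' : ∀ i : Fin g, Fin (k' i) => η' u = w), G η' := by
      rw [← Finset.sum_fiberwise Finset.univ (fun η' : ∀ i : Fin g, Fin (k' i) => η' u)
        (fun η' => q u v (η' u) • G η')]
      refine Finset.sum_congr rfl fun w _ => ?_
      rw [Finset.smul_sum]
      refine Finset.sum_congr rfl fun η' hη' => ?_
      rw [(Finset.mem_filter.mp hη').2]
    rw [hfib]
    have hmarg : ∀ w : Fin (k' u),
        (∑ η' ∈ Finset.univ.filter (fun η' : ∀ i : Fin g, Fin (k' i) => η' u = w), G η')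
        = (s u : ℂ) • E' u w + (((1 - s u) / (k' u) : ℝ) : ℂ) • 1 := fun w => (hGmarg u w).symm
    rw [Finset.sum_congr rfl (fun w _ => by rw [hmarg w])]
    have hsplit : ∑ w : Fin (k' u), q u v w •
        ((s u : ℂ) • E' u w + (((1 - s u) / (k' u) : ℝ) : ℂ) • 1)
        = (∑ w : Fin (k' u), q u v w • ((s u : ℂ) • E' u w))
          + (∑ w : Fin (k' u), q u v w) • ((((1 - s u) / (k' u) : ℝ) : ℂ) • 1) := by
      rw [Finset.sum_smul]
      rw [← Finset.sum_add_distrib]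
      exact Finset.sum_congr rfl fun w _ => smul_add _ _ _
    rw [hsplit]
    -- first summand
    have hv' : (v : ℕ) < k' u := lt_of_lt_of_le v.2 (hkk' u)
    have hfirst : ∑ w : Fin (k' u), q u v w • ((s u : ℂ) • E' u w)
        = (s u : ℂ) • E u v := by
      rw [Finset.sum_eq_single_of_mem (⟨(v : ℕ), hv'⟩ : Fin (k' u)) (Finset.mem_univ _)]
      · have hq1 : q u v ⟨(v : ℕ), hv'⟩ = 1 := by simp [hq, hQ, v.2]
        have hE1 : E' u ⟨(v : ℕ), hv'⟩ = E u v := by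
          simp only [hE'def, hF]
          rw [dif_pos v.2]
        rw [hq1, hE1, one_smul]
      · intro b _ hb
        by_cases hbk : (b : ℕ) < k u
        · have : (b : ℕ) ≠ (v : ℕ) := by
            intro hc
            exact hb (Fin.ext hc)
          simp [hq, hQ, hbk, this]
        · have : E' u b = 0 := by simp [hE'def, hF, hbk]
          rw [this, smul_zero, smul_zero]
    rw [hfirst, hqrow u v]
    -- second summand
    congr 1
    rw [smul_smul]
    congr 1
    push_cast
    field_simp [hk0 u, hk'0 u]
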